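/- Let F : M_n(ℂ) → M_m(ℂ) be a UCP map, let ρ ∈ M_m(ℂ) be a density matrix with state ω = tr(ρ·), let σ ∈ M_n(ℂ) be the density matrix of ξ := ω∘F, and let Q be the support projection of σ. Let F† : M_m(ℂ) → M_n(ℂ) denote the Hilbert–Schmidt adjoint of F, characterized by tr(F(B)*·A) = tr(B*·F†(A)) for all A, B. Let G^L, G^R : M_m(ℂ) → M_n(ℂ) be unital linear maps satisfying the left and right Bayes conditions tr(ρ·A·F(B)) = tr(σ·G^L(A)·B) and tr(ρ·F(B)·A) = tr(σ·B·G^R(A)) for all A, B (such maps exist). Then the following are equivalent: (i) the map A ↦ Q·G^R(A)·Q is star-preserving, i.e., (Q·G^R(A)·Q)* = Q·G^R(A*)·Q for all A; (ii) Q·G^L(A)·Q = Q·G^R(A)·Q for all A; (iii) Q·F†(ρA)·σ = σ·F†(Aρ)·Q for all A ∈ M_m(ℂ); (iv) F(σ·QBQ)·ρ = ρ·F(QBQ·σ) for all B ∈ M_n(ℂ); (v) the map A ↦ Q·G^R(A)·Q is completely positive. -/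

import Mathlib

open Matrix ComplexOrder

/-- The `k`-th amplification `id_{M_k(ℂ)} ⊗ Φ` of a map `Φ` between matrix algebras. -/
def amplify {n m : Type*} (Φ : Matrix n n ℂ → Matrix m m ℂ) (k : ℕ)
    (M : Matrix (Fin k × n) (Fin k × n) ℂ) : Matrix (Fin k × m) (Fin k × m) ℂ :=
  Matrix.of fun p q => Φ (Matrix.of fun a b => M (p.1, a) (q.1, b)) p.2 q.2

/-- Complete positivity: all amplifications preserve positive semidefiniteness. -/
def IsCP {n m : Type*} [Fintype n] [Fintype m] (Φ : Matrix n n ℂ → Matrix m m ℂ) : Prop :=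
  ∀ (k : ℕ) (M : Matrix (Fin k × n) (Fin k × n) ℂ), M.PosSemidef → (amplify Φ k M).PosSemidef

/-- `P` is the support projection of `σ`: the orthogonal projection (Hermitian idempotent)
whose range equals the range of `σ`. -/
def IsSupportProj {n : Type*} [Fintype n] [DecidableEq n] (P σ : Matrix n n ℂ) : Prop :=
  P.IsHermitian ∧ P * P = P ∧ LinearMap.range P.mulVecLin = LinearMap.range σ.mulVecLin

set_option linter.unusedSectionVars false
set_option linter.unusedVariables false

section Helpers

variable {ι κ : Type*} [Fintype ι] [DecidableEq ι] [Fintype κ] [DecidableEq κ]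

lemma trace_ext {X Y : Matrix ι ι ℂ}
    (h : ∀ B : Matrix ι ι ℂ, (X * B).trace = (Y * B).trace) : X = Y := by
  ext i j
  have := h (single j i 1)
  simpa [Matrix.trace, Matrix.mul_apply, Matrix.single, ite_and,
    Finset.sum_ite_eq, Finset.sum_ite_eq'] using this

lemma psd_diag_nonneg {A : Matrix ι ι ℂ} (hA : A.PosSemidef) (i : ι) : 0 ≤ A i i := by
  have := hA.dotProduct_mulVec_nonneg (Pi.single i 1)
  simpa [dotProduct, Pi.single_apply, mulVec, Finset.sum_ite_eq] using this

lemma psd_trace_nonneg {A : Matrix ι ι ℂ} (hA : A.PosSemidef) : 0 ≤ A.trace :=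
  Finset.sum_nonneg fun i _ => psd_diag_nonneg hA i

open scoped MatrixOrder in
lemma trace_psd_mul_nonneg {A B : Matrix ι ι ℂ} (hA : A.PosSemidef) (hB : B.PosSemidef) :
    0 ≤ (A * B).trace := by
  have h1 : A * B = A * (CFC.sqrt B * CFC.sqrt B) := by rw [CFC.sqrt_mul_sqrt_self B hB.nonneg]
  have h2 : (A * (CFC.sqrt B * CFC.sqrt B)).trace = (CFC.sqrt B * A * CFC.sqrt B).trace := by
    rw [← mul_assoc, trace_mul_comm, ← mul_assoc]
  have h3 : (CFC.sqrt B * A * CFC.sqrt B).PosSemidef := by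
    have := hA.conjTranspose_mul_mul_same (CFC.sqrt B)
    rwa [(CFC.sqrt_nonneg B).posSemidef.isHermitian.eq] at this
  rw [h1, h2]
  exact psd_trace_nonneg h3

noncomputable def cal (U : Matrix ι ι ℂ) (d : ι → ℝ) : Matrix ι ι ℂ :=
  U * diagonal (fun i => (d i : ℂ)) * star U

lemma cal_eq (U : Matrix ι ι ℂ) (d : ι → ℝ) :
    cal U d = U * diagonal (fun i => (d i : ℂ)) * star U := rfl

lemma cal_mul {U : Matrix ι ι ℂ} (hU : star U * U = 1) (d e : ι → ℝ) :
    cal U d * cal U e = cal U (fun i => d i * e i) := by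
  unfold cal
  simp only [mul_assoc]
  rw [← mul_assoc (star U) U, hU, one_mul, ← mul_assoc (diagonal _) (diagonal _),
    diagonal_mul_diagonal]
  push_cast
  rfl

lemma cal_congr {U : Matrix ι ι ℂ} {d e : ι → ℝ} (h : ∀ i, d i = e i) : cal U d = cal U e := by
  have hde : d = e := funext h
  rw [hde]

lemma star_ofReal_fun (d : ι → ℝ) : star (fun i => (d i : ℂ)) = fun i => (d i : ℂ) := by
  funext i; simp [Complex.conj_ofReal]

lemma cal_herm (U : Matrix ι ι ℂ) (d : ι → ℝ) : (cal U d).IsHermitian := by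
  unfold Matrix.IsHermitian cal
  simp only [star_eq_conjTranspose, conjTranspose_mul, diagonal_conjTranspose,
    conjTranspose_conjTranspose, star_ofReal_fun, mul_assoc]

lemma cal_psd {U : Matrix ι ι ℂ} {d : ι → ℝ} (hd : ∀ i, 0 ≤ d i) :
    (cal U d).PosSemidef := by
  have h : (diagonal (fun i => (d i : ℂ))).PosSemidef := by
    refine Matrix.PosSemidef.diagonal fun i => ?_
    simpa using Complex.zero_le_real.mpr (hd i)
  simpa [cal, star_eq_conjTranspose] using h.mul_mul_conjTranspose_same U

lemma conj_cal {U : Matrix ι ι ℂ} (hU : star U * U = 1) (d : ι → ℝ) :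
    star U * cal U d * U = diagonal (fun i => (d i : ℂ)) := by
  unfold cal
  rw [← mul_assoc, ← mul_assoc, hU, one_mul, mul_assoc, hU, mul_one]

lemma cal_spectral {A : Matrix ι ι ℂ} (hA : A.IsHermitian) :
    cal (hA.eigenvectorUnitary : Matrix ι ι ℂ) hA.eigenvalues = A := by
  rw [cal]
  have : (fun i => (hA.eigenvalues i : ℂ)) = RCLike.ofReal ∘ hA.eigenvalues := by
    funext i; simp
  rw [this]
  conv_rhs => rw [hA.spectral_theorem]
  rw [Unitary.conjStarAlgAut_apply]

lemma mulVec_ext {M N : Matrix ι ι ℂ} (h : ∀ v, M *ᵥ v = N *ᵥ v) : M = N := by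
  ext i j
  have := congrFun (h (Pi.single j 1)) i
  simpa [mulVec_single] using this

lemma mul_eq_of_range_le {P M : Matrix ι ι ℂ} (hPP : P * P = P)
    (h : LinearMap.range M.mulVecLin ≤ LinearMap.range P.mulVecLin) : P * M = M := by
  refine mulVec_ext fun v => ?_
  have hmem : M *ᵥ v ∈ LinearMap.range P.mulVecLin := h ⟨v, rfl⟩
  obtain ⟨w, hw⟩ := hmem
  simp only [mulVecLin_apply] at hw
  rw [← mulVec_mulVec, ← hw, mulVec_mulVec, hPP, hw]

lemma supportProj_unique {P R σ : Matrix ι ι ℂ} (hP : IsSupportProj P σ)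
    (hR : IsSupportProj R σ) : P = R := by
  obtain ⟨hPh, hPP, hPr⟩ := hP
  obtain ⟨hRh, hRR, hRr⟩ := hR
  have h1 : P * R = R := mul_eq_of_range_le hPP (le_of_eq (hRr.trans hPr.symm))
  have h2 : R * P = P := mul_eq_of_range_le hRR (le_of_eq (hPr.trans hRr.symm))
  calc P = (R * P)ᴴ := by rw [h2, hPh.eq]
    _ = Pᴴ * Rᴴ := by rw [conjTranspose_mul]
    _ = P * R := by rw [hPh.eq, hRh.eq]
    _ = R := h1

lemma herm_decomp {A : Matrix ι ι ℂ} (hA : A.IsHermitian) :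
    ∃ P N : Matrix ι ι ℂ, P.PosSemidef ∧ N.PosSemidef ∧ A = P - N := by
  refine ⟨_, _, cal_psd (U := (hA.eigenvectorUnitary : Matrix ι ι ℂ))
      (d := fun i => max (hA.eigenvalues i) 0) (fun i => le_max_right _ _),
    cal_psd (U := (hA.eigenvectorUnitary : Matrix ι ι ℂ))
      (d := fun i => max (-hA.eigenvalues i) 0) (fun i => le_max_right _ _), ?_⟩
  have hmax : ∀ x : ℝ, max x 0 - max (-x) 0 = x := by
    intro x
    rcases le_total x 0 with h | h
    · rw [max_eq_right h, max_eq_left (by linarith : (0:ℝ) ≤ -x)]; ring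
    · rw [max_eq_left h, max_eq_right (by linarith : -x ≤ 0)]; ring
  have hd : (diagonal (fun i => ((max (hA.eigenvalues i) 0 : ℝ) : ℂ)))
      - diagonal (fun i => ((max (-hA.eigenvalues i) 0 : ℝ) : ℂ))
      = diagonal (fun i => (hA.eigenvalues i : ℂ)) := by
    ext i j
    rcases eq_or_ne i j with rfl | hij
    · simp only [Matrix.sub_apply, diagonal_apply_eq, ← Complex.ofReal_sub, hmax]
    · simp [diagonal_apply_ne _ hij]
  conv_lhs => rw [← cal_spectral hA]
  unfold cal
  rw [← sub_mul, ← mul_sub, hd]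

lemma star_pres_of_pos (Φ : Matrix ι ι ℂ →ₗ[ℂ] Matrix κ κ ℂ)
    (hpos : ∀ A : Matrix ι ι ℂ, A.PosSemidef → (Φ A).PosSemidef) (A : Matrix ι ι ℂ) :
    Φ Aᴴ = (Φ A)ᴴ := by
  have herm : ∀ H : Matrix ι ι ℂ, H.IsHermitian → (Φ H).IsHermitian := by
    intro H hH
    obtain ⟨P, N, hP, hN, rfl⟩ := herm_decomp hH
    rw [map_sub]
    exact (hpos P hP).1.sub (hpos N hN).1
  have hH : ((2⁻¹ : ℂ) • (A + Aᴴ)).IsHermitian := by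
    unfold Matrix.IsHermitian
    ext i j
    simp only [conjTranspose_apply, Matrix.smul_apply, Matrix.add_apply, smul_eq_mul, Complex.star_def,
      _root_.map_mul, _root_.map_add, _root_.map_inv₀, _root_.map_ofNat, Complex.conj_conj,
      Complex.conj_ofNat, _root_.map_one, _root_.map_div₀, _root_.map_neg]
    ring
  have hK : (((-2⁻¹ : ℂ) * Complex.I) • (A - Aᴴ)).IsHermitian := by
    unfold Matrix.IsHermitian
    ext i j
    simp only [conjTranspose_apply, Matrix.smul_apply, Matrix.sub_apply, smul_eq_mul, Complex.star_def,
      _root_.map_mul, _root_.map_sub, _root_.map_neg, _root_.map_inv₀, _root_.map_ofNat,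
      _root_.map_one, _root_.map_div₀, Complex.conj_conj, Complex.conj_I, Complex.conj_ofNat]
    ring
  have hA2 : A = (2⁻¹ : ℂ) • (A + Aᴴ) + Complex.I • (((-2⁻¹ : ℂ) * Complex.I) • (A - Aᴴ)) := by
    ext i j
    simp only [Matrix.add_apply, Matrix.smul_apply, Matrix.sub_apply, smul_eq_mul, conjTranspose_apply,
      Complex.star_def]
    linear_combination ((2:ℂ)⁻¹ * (A i j - (starRingEnd ℂ) (A j i))) * Complex.I_sq
  have hA3 : Aᴴ = (2⁻¹ : ℂ) • (A + Aᴴ) - Complex.I • (((-2⁻¹ : ℂ) * Complex.I) • (A - Aᴴ)) := by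
    conv_lhs => rw [hA2]
    rw [conjTranspose_add, hH.eq, conjTranspose_smul, hK.eq, Complex.star_def, Complex.conj_I,
      neg_smul, ← sub_eq_add_neg]
  have e1 : (Φ ((2⁻¹ : ℂ) • (A + Aᴴ)))ᴴ = Φ ((2⁻¹ : ℂ) • (A + Aᴴ)) := (herm _ hH).eq
  have e2 : (Φ (((-2⁻¹ : ℂ) * Complex.I) • (A - Aᴴ)))ᴴ = Φ (((-2⁻¹ : ℂ) * Complex.I) • (A - Aᴴ)) :=
    (herm _ hK).eq
  rw [hA3]
  conv_rhs => rw [hA2]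
  rw [map_sub, _root_.map_add, conjTranspose_add, e1, _root_.map_smul Φ Complex.I,
    conjTranspose_smul, e2, Complex.star_def, Complex.conj_I, neg_smul, ← sub_eq_add_neg]

lemma isCP_pos {Φ : Matrix ι ι ℂ → Matrix κ κ ℂ} (hΦ : IsCP Φ) {A : Matrix ι ι ℂ}
    (hA : A.PosSemidef) : (Φ A).PosSemidef := by
  have h1 : (A.submatrix (Prod.snd : Fin 1 × ι → ι) Prod.snd).PosSemidef := hA.submatrix _
  have h2 := hΦ 1 _ h1
  have h3 : amplify Φ 1 (A.submatrix Prod.snd Prod.snd)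
      = (Φ A).submatrix (Prod.snd : Fin 1 × κ → κ) Prod.snd := by
    ext p q
    show Φ (Matrix.of fun a b => A.submatrix Prod.snd Prod.snd (p.1, a) (q.1, b)) p.2 q.2 = _
    congr
  rw [h3] at h2
  have h4 := h2.submatrix (fun i => ((0 : Fin 1), i) : κ → Fin 1 × κ)
  convert h4
  ext i j
  rfl

def blk {k : ℕ} (M : Matrix (Fin k × ι) (Fin k × ι) ℂ) (a b : Fin k) : Matrix ι ι ℂ :=
  Matrix.of fun i j => M (a, i) (b, j)

def oneKron (k : ℕ) (X : Matrix κ κ ℂ) : Matrix (Fin k × κ) (Fin k × κ) ℂ :=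
  Matrix.of fun p q => if p.1 = q.1 then X p.2 q.2 else 0

lemma oneKron_herm {k : ℕ} {X : Matrix κ κ ℂ} (hX : X.IsHermitian) :
    (oneKron k X).IsHermitian := by
  unfold Matrix.IsHermitian
  ext ⟨a, i⟩ ⟨b, j⟩
  simp only [conjTranspose_apply, oneKron, Matrix.of_apply]
  split_ifs with h1 h2 h3
  · subst h1; rw [← conjTranspose_apply, hX.eq]
  · exact absurd h1.symm h2
  · exact absurd h3.symm h1
  · simp

lemma oneKron_conj_apply {k : ℕ} (c f : Matrix κ κ ℂ) (Y : Matrix (Fin k × κ) (Fin k × κ) ℂ)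
    (p q : Fin k × κ) :
    (oneKron k c * Y * oneKron k f) p q
      = (c * (blk Y p.1 q.1) * f) p.2 q.2 := by
  simp only [mul_apply, oneKron, blk, Matrix.of_apply, Fintype.sum_prod_type,
    ite_mul, zero_mul, mul_ite, mul_zero, Finset.sum_ite_irrel, Finset.sum_const_zero,
    Finset.sum_ite_eq, Finset.sum_ite_eq', Finset.mem_univ, if_true]

lemma blk_oneKron_conj {k : ℕ} (c f : Matrix κ κ ℂ) (Y : Matrix (Fin k × κ) (Fin k × κ) ℂ)
    (a b : Fin k) :
    blk (oneKron k c * Y * oneKron k f) a b = c * blk Y a b * f := by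
  ext i j
  exact oneKron_conj_apply c f Y (a, i) (b, j)

lemma amplify_sandwich {k : ℕ} (Φ : Matrix ι ι ℂ → Matrix κ κ ℂ) (c f : Matrix κ κ ℂ)
    (d e : Matrix ι ι ℂ) (M : Matrix (Fin k × ι) (Fin k × ι) ℂ) :
    amplify (fun A => c * Φ (d * A * e) * f) k M
      = oneKron k c * amplify Φ k (oneKron k d * M * oneKron k e) * oneKron k f := by
  ext p q
  rw [oneKron_conj_apply]
  have hblk : blk (amplify Φ k (oneKron k d * M * oneKron k e)) p.1 q.1
      = Φ (d * blk M p.1 q.1 * e) := by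
    ext i j
    show amplify Φ k (oneKron k d * M * oneKron k e) (p.1, i) (q.1, j) = _
    unfold amplify
    rw [Matrix.of_apply]
    have h2 : (Matrix.of fun a b => (oneKron k d * M * oneKron k e) ((p.1, i).1, a) ((q.1, j).1, b))
        = blk (oneKron k d * M * oneKron k e) p.1 q.1 := rfl
    rw [h2, blk_oneKron_conj]
  rw [hblk]
  rfl

lemma amplify_herm {k : ℕ} {Φ : Matrix ι ι ℂ → Matrix κ κ ℂ}
    (hst : ∀ A, Φ Aᴴ = (Φ A)ᴴ) {M : Matrix (Fin k × ι) (Fin k × ι) ℂ}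
    (hM : M.IsHermitian) : (amplify Φ k M).IsHermitian := by
  unfold Matrix.IsHermitian
  ext ⟨p1, p2⟩ ⟨q1, q2⟩
  show star (amplify Φ k M (q1, q2) (p1, p2)) = _
  have hb : (blk M q1 p1)ᴴ = blk M p1 q1 := by
    ext i j
    show star (M (q1, j) (p1, i)) = M (p1, i) (q1, j)
    rw [← conjTranspose_apply, hM.eq]
  show star (Φ (blk M q1 p1) q2 p2) = Φ (blk M p1 q1) p2 q2
  rw [← hb, hst, conjTranspose_apply]

lemma dot_eq_trace (Y : Matrix ι ι ℂ) (x : ι → ℂ) :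
    star x ⬝ᵥ (Y *ᵥ x) = (Y * vecMulVec x (star x)).trace := by
  simp only [dotProduct, mulVec, Matrix.trace, Matrix.diag, mul_apply, vecMulVec_apply,
    Pi.star_apply, dotProduct, Finset.mul_sum, Finset.sum_mul]
  refine Finset.sum_congr rfl fun i _ => Finset.sum_congr rfl fun j _ => by ring

lemma vecMulVec_psd (x : ι → ℂ) : (vecMulVec x (star x)).PosSemidef := by
  refine PosSemidef.of_dotProduct_mulVec_nonneg ?_ ?_
  · unfold Matrix.IsHermitian
    ext i j
    simp [vecMulVec_apply, conjTranspose_apply, mul_comm]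
  · intro y
    have : star y ⬝ᵥ (vecMulVec x (star x) *ᵥ y) = (star y ⬝ᵥ x) * star (star y ⬝ᵥ x) := by
      simp only [dotProduct, mulVec, vecMulVec_apply, Pi.star_apply, dotProduct, star_sum,
        Finset.mul_sum, Finset.sum_mul, star_mul', star_star]
      rw [show (∑ a : ι, ∑ b : ι, star (y a) * (x a * star (x b) * y b))
          = ∑ b : ι, ∑ a : ι, star (y a) * (x a * star (x b) * y b) from Finset.sum_comm]
      refine Finset.sum_congr rfl fun i _ => Finset.sum_congr rfl fun j _ => by ring
    rw [this]
    exact mul_star_self_nonneg _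

lemma amplify_trace_pair {F : Matrix ι ι ℂ → Matrix κ κ ℂ} {Fd : Matrix κ κ ℂ → Matrix ι ι ℂ}
    (hpair : ∀ (X : Matrix κ κ ℂ) (Y : Matrix ι ι ℂ), (Fd X * Y).trace = (X * F Y).trace)
    (k : ℕ) (M : Matrix (Fin k × κ) (Fin k × κ) ℂ) (X : Matrix (Fin k × ι) (Fin k × ι) ℂ) :
    (amplify Fd k M * X).trace = (M * amplify F k X).trace := by
  have lhs : (amplify Fd k M * X).trace = ∑ p1 : Fin k, ∑ q1 : Fin k,
      (Fd (blk M p1 q1) * blk X q1 p1).trace := by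
    simp only [Matrix.trace, Matrix.diag, mul_apply, Fintype.sum_prod_type, amplify, blk,
      Matrix.of_apply]
    exact Finset.sum_congr rfl fun p1 _ => Finset.sum_comm
  have rhs : (M * amplify F k X).trace = ∑ p1 : Fin k, ∑ q1 : Fin k,
      (blk M p1 q1 * F (blk X q1 p1)).trace := by
    simp only [Matrix.trace, Matrix.diag, mul_apply, Fintype.sum_prod_type, amplify, blk,
      Matrix.of_apply]
    exact Finset.sum_congr rfl fun p1 _ => Finset.sum_comm
  rw [lhs, rhs]
  exact Finset.sum_congr rfl fun p1 _ => Finset.sum_congr rfl fun q1 _ => hpair _ _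

lemma conj_split {V : Matrix ι ι ℂ} (hV : V * star V = 1) (M N : Matrix ι ι ℂ) :
    star V * (M * N) * V = (star V * M * V) * (star V * N * V) := by
  have h : (star V * M * V) * (star V * N * V) = star V * (M * ((V * star V) * (N * V))) := by
    simp only [mul_assoc]
  rw [h, hV, one_mul]
  simp only [mul_assoc]

lemma conj_inj {V : Matrix ι ι ℂ} (hV : V * star V = 1) {X Y : Matrix ι ι ℂ}
    (h : star V * X * V = star V * Y * V) : X = Y := by
  have h2 := congrArg (fun M => V * M * star V) h
  have e : ∀ Z : Matrix ι ι ℂ, V * (star V * Z * V) * star V = (V * star V) * Z * (V * star V) := by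
    intro Z; simp only [mul_assoc]
  rw [e, e, hV, one_mul, one_mul, mul_one, mul_one] at h2
  exact h2

lemma conj_conj {W : Matrix ι ι ℂ} (hW : W * star W = 1) (X : Matrix ι ι ℂ) :
    W * (star W * X * W) * star W = X := by
  have e : W * (star W * X * W) * star W = (W * star W) * X * (W * star W) := by
    simp only [mul_assoc]
  rw [e, hW, one_mul, mul_one]

lemma sandwich_mul {W : Matrix ι ι ℂ} (hW : star W * W = 1) (X Y : Matrix ι ι ℂ) :
    (W * X * star W) * (W * Y * star W) = W * (X * Y) * star W := by
  have h : (W * X * star W) * (W * Y * star W) = W * (X * ((star W * W) * (Y * star W))) := by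
    simp only [mul_assoc]
  rw [h, hW, one_mul]
  simp only [mul_assoc]

lemma diag_mul_single (d : ι → ℂ) (c j : ι) :
    diagonal d * single c j 1 = d c • single c j 1 := by
  ext a b
  simp only [diagonal_mul, Matrix.smul_apply, single, Matrix.of_apply, smul_eq_mul, ite_and]
  split_ifs with h1 h2 <;> simp_all

lemma single_mul_diag (d : ι → ℂ) (c j : ι) :
    single c j 1 * diagonal d = d j • single c j 1 := by
  ext a b
  simp only [mul_diagonal, Matrix.smul_apply, single, Matrix.of_apply, smul_eq_mul, ite_and]
  split_ifs with h1 h2 <;> simp_all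

lemma scalar_key {pa pb qc qj : ℝ} (hpa : 0 ≤ pa) (hpb : 0 ≤ pb) (hqc : 0 ≤ qc) (hqj : 0 ≤ qj)
    {t : ℂ} (h : (qc : ℂ) * (t * pb) = (qj : ℂ) * (pa * t)) :
    ((if qc = 0 then (0:ℝ) else (Real.sqrt qc)⁻¹ : ℝ) : ℂ) * ((Real.sqrt qj : ℝ) : ℂ)
      * ((pa : ℂ) * t)
    = ((if qc = 0 then (0:ℝ) else (1:ℝ)) : ℂ) * ((if qj = 0 then (0:ℝ) else (1:ℝ)) : ℂ)
      * (((Real.sqrt pa : ℝ) : ℂ) * t * ((Real.sqrt pb : ℝ) : ℂ)) := by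
  rcases eq_or_ne t 0 with rfl | ht
  · ring
  have key : qc * pb = qj * pa := by
    have h2 : ((qc * pb : ℝ) : ℂ) * t = ((qj * pa : ℝ) : ℂ) * t := by
      push_cast; linear_combination h
    exact_mod_cast mul_right_cancel₀ ht h2
  by_cases hc : qc = 0
  · simp only [hc, if_pos rfl]
    rcases eq_or_ne qj 0 with hj | hj
    · simp [hj]
    · have hpa0 : pa = 0 := by
        have : qj * pa = 0 := by rw [← key, hc, zero_mul]
        rcases mul_eq_zero.mp this with h' | h'
        · exact absurd h' hj
        · exact h'
      simp [hpa0]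
  · rcases eq_or_ne qj 0 with hj | hj
    · simp [hj, hc, Real.sqrt_eq_zero']
    · simp only [if_neg hc, if_neg hj]
      have hqc' : 0 < qc := lt_of_le_of_ne hqc (Ne.symm hc)
      have hqj' : 0 < qj := lt_of_le_of_ne hqj (Ne.symm hj)
      have hpb' : pb = qj * pa / qc := by field_simp at key ⊢; linarith [key]
      have hsb : Real.sqrt pb = Real.sqrt qj * Real.sqrt pa / Real.sqrt qc := by
        rw [hpb', Real.sqrt_div (by positivity), Real.sqrt_mul hqj]
      rw [hsb]
      have hsc : Real.sqrt qc ≠ 0 := by positivity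
      have hpa2 : ((pa : ℝ) : ℂ) = (Real.sqrt pa : ℂ) * (Real.sqrt pa : ℂ) := by
        rw [← Complex.ofReal_mul, Real.mul_self_sqrt hpa]
      push_cast
      rw [hpa2]
      field_simp

end Helpers

set_option maxHeartbeats 2000000 in
/-- non-commutative Bayes' theorem on matrix algebras: for a UCP map
`F : M_n(ℂ) → M_m(ℂ)`, a density matrix `ρ` with `σ` the density matrix of `ω∘F`, `Q`
the support projection of `σ`, `F†` the Hilbert–Schmidt adjoint of `F`, and `G^L`, `G^R`
unital left/right Bayes maps, the following are equivalent: (i) `A ↦ Q·G^R(A)·Q` is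
star-preserving; (ii) `Q·G^L(·)·Q = Q·G^R(·)·Q`; (iii) `Q·F†(ρA)·σ = σ·F†(Aρ)·Q`;
(iv) `F(σ·QBQ)·ρ = ρ·F(QBQ·σ)`; (v) `A ↦ Q·G^R(A)·Q` is completely positive. -/
theorem stmt_15 (n m : ℕ)
    (F : Matrix (Fin n) (Fin n) ℂ →ₗ[ℂ] Matrix (Fin m) (Fin m) ℂ)
    (hFcp : IsCP (⇑F)) (hFunital : F 1 = 1)
    (ρ : Matrix (Fin m) (Fin m) ℂ) (hρ : ρ.PosSemidef) (hρtr : ρ.trace = 1)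
    (σ : Matrix (Fin n) (Fin n) ℂ) (hσps : σ.PosSemidef) (hσtr : σ.trace = 1)
    (hσ : ∀ B : Matrix (Fin n) (Fin n) ℂ, (σ * B).trace = (ρ * F B).trace)
    (Q : Matrix (Fin n) (Fin n) ℂ) (hQ : IsSupportProj Q σ)
    (Fd : Matrix (Fin m) (Fin m) ℂ →ₗ[ℂ] Matrix (Fin n) (Fin n) ℂ)
    (hFd : ∀ (A : Matrix (Fin m) (Fin m) ℂ) (B : Matrix (Fin n) (Fin n) ℂ),
      ((F B)ᴴ * A).trace = (Bᴴ * Fd A).trace)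
    (Gleft : Matrix (Fin m) (Fin m) ℂ →ₗ[ℂ] Matrix (Fin n) (Fin n) ℂ) (hGLu : Gleft 1 = 1)
    (hGL : ∀ (A : Matrix (Fin m) (Fin m) ℂ) (B : Matrix (Fin n) (Fin n) ℂ),
      (ρ * A * F B).trace = (σ * Gleft A * B).trace)
    (Gright : Matrix (Fin m) (Fin m) ℂ →ₗ[ℂ] Matrix (Fin n) (Fin n) ℂ) (hGRu : Gright 1 = 1)
    (hGR : ∀ (A : Matrix (Fin m) (Fin m) ℂ) (B : Matrix (Fin n) (Fin n) ℂ),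
      (ρ * F B * A).trace = (σ * B * Gright A).trace) :
    ((∀ A : Matrix (Fin m) (Fin m) ℂ, (Q * Gright A * Q)ᴴ = Q * Gright (Aᴴ) * Q) ↔
     (∀ A : Matrix (Fin m) (Fin m) ℂ, Q * Gleft A * Q = Q * Gright A * Q)) ∧
    ((∀ A : Matrix (Fin m) (Fin m) ℂ, Q * Gleft A * Q = Q * Gright A * Q) ↔
     (∀ A : Matrix (Fin m) (Fin m) ℂ, Q * Fd (ρ * A) * σ = σ * Fd (A * ρ) * Q)) ∧
    ((∀ A : Matrix (Fin m) (Fin m) ℂ, Q * Fd (ρ * A) * σ = σ * Fd (A * ρ) * Q) ↔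
     (∀ B : Matrix (Fin n) (Fin n) ℂ,
        F (σ * (Q * B * Q)) * ρ = ρ * F ((Q * B * Q) * σ))) ∧
    ((∀ B : Matrix (Fin n) (Fin n) ℂ,
        F (σ * (Q * B * Q)) * ρ = ρ * F ((Q * B * Q) * σ)) ↔
     IsCP (fun A => Q * Gright A * Q)) := by
  classical
  have hρh : ρ.IsHermitian := hρ.1
  have hσh : σ.IsHermitian := hσps.1
  set W : Matrix (Fin n) (Fin n) ℂ := (hσh.eigenvectorUnitary : Matrix (Fin n) (Fin n) ℂ)
    with hWdef
  set V : Matrix (Fin m) (Fin m) ℂ := (hρh.eigenvectorUnitary : Matrix (Fin m) (Fin m) ℂ)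
    with hVdef
  set q : Fin n → ℝ := hσh.eigenvalues with hqdef
  set p : Fin m → ℝ := hρh.eigenvalues with hpdef
  have hW1 : star W * W = 1 := Unitary.star_mul_self_of_mem hσh.eigenvectorUnitary.2
  have hW2 : W * star W = 1 := Unitary.mul_star_self_of_mem hσh.eigenvectorUnitary.2
  have hV1 : star V * V = 1 := Unitary.star_mul_self_of_mem hρh.eigenvectorUnitary.2
  have hV2 : V * star V = 1 := Unitary.mul_star_self_of_mem hρh.eigenvectorUnitary.2
  have hq0 : ∀ i, 0 ≤ q i := fun i => hσps.eigenvalues_nonneg i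
  have hp0 : ∀ i, 0 ≤ p i := fun i => hρ.eigenvalues_nonneg i
  have hσcal : σ = cal W q := (cal_spectral hσh).symm
  have hρcal : ρ = cal V p := (cal_spectral hρh).symm
  set Q0 : Matrix (Fin n) (Fin n) ℂ := cal W (fun i => if q i = 0 then 0 else 1) with hQ0def
  set tau : Matrix (Fin n) (Fin n) ℂ := cal W (fun i => if q i = 0 then 0 else (q i)⁻¹)
    with htaudef
  set u : Matrix (Fin n) (Fin n) ℂ := cal W (fun i => Real.sqrt (q i)) with hudef
  set s : Matrix (Fin n) (Fin n) ℂ := cal W (fun i => if q i = 0 then 0 else (Real.sqrt (q i))⁻¹)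
    with hsdef
  set r : Matrix (Fin m) (Fin m) ℂ := cal V (fun i => Real.sqrt (p i)) with hrdef
  -- algebra of the functional calculus
  have hστ : σ * tau = Q0 := by
    rw [hσcal, htaudef, cal_mul hW1, hQ0def]
    exact cal_congr fun i => by by_cases h : q i = 0 <;> simp [h] <;> field_simp
  have hτσ : tau * σ = Q0 := by
    rw [hσcal, htaudef, cal_mul hW1, hQ0def]
    exact cal_congr fun i => by by_cases h : q i = 0 <;> simp [h] <;> field_simp
  have hσQ0 : σ * Q0 = σ := by
    rw [hσcal, hQ0def, cal_mul hW1]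
    exact cal_congr fun i => by by_cases h : q i = 0 <;> simp [h]
  have hQ0σ : Q0 * σ = σ := by
    rw [hσcal, hQ0def, cal_mul hW1]
    exact cal_congr fun i => by by_cases h : q i = 0 <;> simp [h]
  have hQ0Q0 : Q0 * Q0 = Q0 := by
    rw [hQ0def, cal_mul hW1]
    exact cal_congr fun i => by by_cases h : q i = 0 <;> simp [h]
  have hsu : s * u = Q0 := by
    rw [hsdef, hudef, cal_mul hW1, hQ0def]
    refine cal_congr fun i => ?_
    by_cases h : q i = 0
    · simp [h]
    · have : Real.sqrt (q i) ≠ 0 := by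
        simpa [Real.sqrt_eq_zero' ] using lt_of_le_of_ne (hq0 i) (Ne.symm h)
      simp [h, inv_mul_cancel₀ this]
  have hus : u * s = Q0 := by
    rw [hsdef, hudef, cal_mul hW1, hQ0def]
    refine cal_congr fun i => ?_
    by_cases h : q i = 0
    · simp [h]
    · have : Real.sqrt (q i) ≠ 0 := by
        simpa [Real.sqrt_eq_zero'] using lt_of_le_of_ne (hq0 i) (Ne.symm h)
      simp [h, mul_inv_cancel₀ this]
  have hsQ0 : s * Q0 = s := by
    rw [hsdef, hQ0def, cal_mul hW1]
    exact cal_congr fun i => by by_cases h : q i = 0 <;> simp [h]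
  have hQ0s : Q0 * s = s := by
    rw [hsdef, hQ0def, cal_mul hW1]
    exact cal_congr fun i => by by_cases h : q i = 0 <;> simp [h]
  have hσs : σ * s = u := by
    rw [hσcal, hsdef, cal_mul hW1, hudef]
    refine cal_congr fun i => ?_
    by_cases h : q i = 0
    · simp [h, Real.sqrt_eq_zero' ]
    · have hlt : 0 < q i := lt_of_le_of_ne (hq0 i) (Ne.symm h)
      have hs : Real.sqrt (q i) ≠ 0 := by positivity
      rw [if_neg h]
      rw [show q i = Real.sqrt (q i) * Real.sqrt (q i) from (Real.mul_self_sqrt (hq0 i)).symm]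
      field_simp
      rw [Real.sqrt_sq (Real.sqrt_nonneg _)]
  have hrr : r * r = ρ := by
    rw [hρcal, hrdef, cal_mul hV1]
    exact cal_congr fun i => Real.mul_self_sqrt (hp0 i)
  -- Q is the canonical support projection
  have hQ0supp : IsSupportProj Q0 σ := by
    refine ⟨cal_herm _ _, hQ0Q0, le_antisymm ?_ ?_⟩
    · rintro x ⟨v, rfl⟩
      refine ⟨tau *ᵥ v, ?_⟩
      simp only [mulVecLin_apply]
      rw [mulVec_mulVec, hστ]
    · rintro x ⟨v, rfl⟩
      refine ⟨σ *ᵥ v, ?_⟩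
      simp only [mulVecLin_apply]
      rw [mulVec_mulVec, hQ0σ]
  have hQeq : Q = Q0 := supportProj_unique hQ hQ0supp
  subst hQeq
  -- star preservation and the pairing duality
  have hFpos : ∀ A : Matrix (Fin n) (Fin n) ℂ, A.PosSemidef → (F A).PosSemidef :=
    fun A hA => isCP_pos hFcp hA
  have hFstar : ∀ B, F Bᴴ = (F B)ᴴ := star_pres_of_pos F hFpos
  have pairing : ∀ (A : Matrix (Fin m) (Fin m) ℂ) (B : Matrix (Fin n) (Fin n) ℂ),
      (F B * A).trace = (B * Fd A).trace := by
    intro A B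
    have h := hFd A Bᴴ
    rwa [hFstar B, conjTranspose_conjTranspose, conjTranspose_conjTranspose] at h
  have pair2 : ∀ (X : Matrix (Fin m) (Fin m) ℂ) (Y : Matrix (Fin n) (Fin n) ℂ),
      (Fd X * Y).trace = (X * F Y).trace := by
    intro X Y
    rw [trace_mul_comm, ← pairing X Y, trace_mul_comm]
  have hFdstar : ∀ A, Fd Aᴴ = (Fd A)ᴴ := by
    intro A
    refine trace_ext fun B => ?_
    have l1 : (Fd Aᴴ * B).trace = (Aᴴ * F B).trace := pair2 _ _
    have l2 : ((Fd A)ᴴ * B).trace = (Aᴴ * F B).trace := by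
      have e1 : ((Fd A)ᴴ * B) = (Bᴴ * Fd A)ᴴ := by
        rw [conjTranspose_mul, conjTranspose_conjTranspose]
      rw [e1, trace_conjTranspose, ← hFd A B, ← trace_conjTranspose, conjTranspose_mul,
        conjTranspose_conjTranspose]
    rw [l1, l2]
  have hGlFd : ∀ A, σ * Gleft A = Fd (ρ * A) := by
    intro A
    exact trace_ext fun B => ((hGL A B).symm).trans (pair2 (ρ * A) B).symm
  have hGrFd : ∀ A, Gright A * σ = Fd (A * ρ) := by
    intro A
    refine trace_ext fun B => ?_
    calc ((Gright A * σ) * B).trace = ((σ * B) * Gright A).trace := by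
          rw [mul_assoc, trace_mul_comm]
      _ = (ρ * F B * A).trace := (hGR A B).symm
      _ = ((A * ρ) * F B).trace := by rw [trace_mul_comm (ρ * F B) A, ← mul_assoc]
      _ = (Fd (A * ρ) * B).trace := (pair2 _ _).symm
  -- the unconditional support lemmas
  have C1 : ∀ B, F (σ * B * Q0) * ρ = F (σ * B) * ρ := by
    intro B
    refine trace_ext fun A => ?_
    have lhs' : ((F (σ * B * Q0) * ρ) * A).trace = (σ * (Gleft A * (σ * B))).trace := by
      rw [mul_assoc, trace_mul_comm, hGL A (σ * B * Q0),
        show σ * Gleft A * (σ * B * Q0) = (σ * Gleft A * (σ * B)) * Q0 from by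
          simp only [mul_assoc],
        trace_mul_comm _ Q0,
        show Q0 * (σ * Gleft A * (σ * B)) = (Q0 * σ) * (Gleft A * (σ * B)) from by
          simp only [mul_assoc], hQ0σ]
    have rhs' : ((F (σ * B) * ρ) * A).trace = (σ * (Gleft A * (σ * B))).trace := by
      rw [mul_assoc, trace_mul_comm, hGL A (σ * B),
        show σ * Gleft A * (σ * B) = σ * (Gleft A * (σ * B)) from by simp only [mul_assoc]]
    rw [lhs', rhs']
  have C2 : ∀ B, ρ * F (Q0 * B * σ) = ρ * F (B * σ) := by
    intro B
    refine trace_ext fun A => ?_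
    rw [show (ρ * F (Q0 * B * σ)) * A = ρ * F (Q0 * B * σ) * A from rfl, hGR A (Q0 * B * σ),
      show (ρ * F (B * σ)) * A = ρ * F (B * σ) * A from rfl, hGR A (B * σ)]
    congr 1
    rw [show σ * (Q0 * B * σ) * Gright A = ((σ * Q0) * B * σ) * Gright A from by
      simp only [mul_assoc], hσQ0]
    simp only [mul_assoc]
  -- the bridges between the conditions
  have e3l : ∀ A, Q0 * Fd (ρ * A) * σ = σ * Gleft A * σ := by
    intro A
    rw [← hGlFd A, show Q0 * (σ * Gleft A) * σ = (Q0 * σ) * Gleft A * σ from by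
      simp only [mul_assoc], hQ0σ]
  have e3r : ∀ A, σ * Fd (A * ρ) * Q0 = σ * Gright A * σ := by
    intro A
    rw [← hGrFd A, show σ * (Gright A * σ) * Q0 = σ * Gright A * (σ * Q0) from by
      simp only [mul_assoc], hσQ0]
  have e12 : ∀ A, (Q0 * Gleft A * Q0)ᴴ = Q0 * Gright Aᴴ * Q0 := by
    intro A
    have h1 : (Gleft A)ᴴ * σ = Gright Aᴴ * σ := by
      have h2 := congrArg conjTranspose (hGlFd A)
      rw [conjTranspose_mul, hσh.eq, ← hFdstar, conjTranspose_mul, hρh.eq] at h2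
      rw [h2, hGrFd]
    have h3 : (Gleft A)ᴴ * Q0 = Gright Aᴴ * Q0 := by
      have h4 := congrArg (fun X => X * tau) h1
      rw [mul_assoc, mul_assoc, hστ] at h4
      exact h4
    have hQh : Q0ᴴ = Q0 := (cal_herm _ _).eq
    calc (Q0 * Gleft A * Q0)ᴴ = Q0 * ((Gleft A)ᴴ * Q0) := by
          rw [conjTranspose_mul, conjTranspose_mul, hQh, ← mul_assoc, mul_assoc]
      _ = Q0 * (Gright Aᴴ * Q0) := by rw [h3]
      _ = Q0 * Gright Aᴴ * Q0 := by rw [mul_assoc]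
  -- (i) ↔ (ii)
  have h12 : (∀ A : Matrix (Fin m) (Fin m) ℂ, (Q0 * Gright A * Q0)ᴴ = Q0 * Gright (Aᴴ) * Q0) ↔
      (∀ A : Matrix (Fin m) (Fin m) ℂ, Q0 * Gleft A * Q0 = Q0 * Gright A * Q0) := by
    constructor
    · intro h1 A
      have h := congrArg conjTranspose (e12 A)
      rw [conjTranspose_conjTranspose, h1 Aᴴ, conjTranspose_conjTranspose] at h
      exact h
    · intro h2 A
      rw [← h2 A, e12 A]
  -- (ii) ↔ (iii)
  have keyS : ∀ X : Matrix (Fin n) (Fin n) ℂ, σ * (Q0 * X * Q0) * σ = σ * X * σ := by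
    intro X
    rw [show σ * (Q0 * X * Q0) * σ = (σ * Q0) * (X * (Q0 * σ)) from by simp only [mul_assoc],
      hσQ0, hQ0σ, ← mul_assoc]
  have keyT : ∀ X : Matrix (Fin n) (Fin n) ℂ, tau * (σ * X * σ) * tau = Q0 * X * Q0 := by
    intro X
    rw [show tau * (σ * X * σ) * tau = (tau * σ) * (X * (σ * tau)) from by simp only [mul_assoc],
      hτσ, hστ, ← mul_assoc]
  have h23 : (∀ A : Matrix (Fin m) (Fin m) ℂ, Q0 * Gleft A * Q0 = Q0 * Gright A * Q0) ↔
      (∀ A : Matrix (Fin m) (Fin m) ℂ, Q0 * Fd (ρ * A) * σ = σ * Fd (A * ρ) * Q0) := by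
    constructor
    · intro h2 A
      rw [e3l, e3r, ← keyS (Gleft A), ← keyS (Gright A), h2]
    · intro h3 A
      have h4 : σ * Gleft A * σ = σ * Gright A * σ := by rw [← e3l, ← e3r, h3]
      rw [← keyT (Gleft A), ← keyT (Gright A), h4]
  -- (iii) ↔ star-condition ↔ (iv)
  have cstar_iff : (∀ A, σ * Gleft A * σ = σ * Gright A * σ) ↔
      (∀ B, F (σ * B) * ρ = ρ * F (B * σ)) := by
    constructor
    · intro h B
      refine trace_ext fun A => ?_
      calc ((F (σ * B) * ρ) * A).trace
          = (σ * Gleft A * (σ * B)).trace := by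
            rw [mul_assoc, trace_mul_comm]; exact hGL A (σ * B)
        _ = ((σ * Gleft A * σ) * B).trace := by
            rw [show σ * Gleft A * (σ * B) = (σ * Gleft A * σ) * B from by simp only [mul_assoc]]
        _ = ((σ * Gright A * σ) * B).trace := by rw [h A]
        _ = (σ * (B * σ) * Gright A).trace := by
            rw [show (σ * Gright A * σ) * B = (σ * Gright A) * (σ * B) from by
              simp only [mul_assoc], trace_mul_comm,
              show (σ * B) * (σ * Gright A) = σ * (B * σ) * Gright A from by
                simp only [mul_assoc]]
        _ = ((ρ * F (B * σ)) * A).trace := (hGR A (B * σ)).symm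
    · intro h A
      refine trace_ext fun B => ?_
      calc ((σ * Gleft A * σ) * B).trace
          = (ρ * A * F (σ * B)).trace := by
            rw [show (σ * Gleft A * σ) * B = σ * Gleft A * (σ * B) from by
              simp only [mul_assoc]]
            exact (hGL A (σ * B)).symm
        _ = (A * (F (σ * B) * ρ)).trace := by rw [mul_assoc, trace_mul_comm, mul_assoc]
        _ = (A * (ρ * F (B * σ))).trace := by rw [h B]
        _ = ((σ * Gright A * σ) * B).trace := by
            rw [trace_mul_comm, show (ρ * F (B * σ)) * A = ρ * F (B * σ) * A from rfl,
              hGR A (B * σ),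
              show σ * (B * σ) * Gright A = (σ * B) * (σ * Gright A) from by
                simp only [mul_assoc], trace_mul_comm,
              show (σ * Gright A) * (σ * B) = (σ * Gright A * σ) * B from by
                simp only [mul_assoc]]
  have c3s : (∀ A : Matrix (Fin m) (Fin m) ℂ, Q0 * Fd (ρ * A) * σ = σ * Fd (A * ρ) * Q0) ↔
      (∀ A, σ * Gleft A * σ = σ * Gright A * σ) :=
    forall_congr' fun A => by rw [e3l, e3r]
  have c4_iff : (∀ B, F (σ * B) * ρ = ρ * F (B * σ)) ↔
      (∀ B : Matrix (Fin n) (Fin n) ℂ,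
        F (σ * (Q0 * B * Q0)) * ρ = ρ * F ((Q0 * B * Q0) * σ)) := by
    constructor
    · intro h B
      exact h (Q0 * B * Q0)
    · intro h4 B
      have ha : σ * (Q0 * B * Q0) = σ * B * Q0 := by
        rw [show σ * (Q0 * B * Q0) = (σ * Q0) * B * Q0 from by simp only [mul_assoc], hσQ0]
      have hb : (Q0 * B * Q0) * σ = Q0 * B * σ := by
        simp only [mul_assoc]; rw [hQ0σ]
      calc F (σ * B) * ρ = F (σ * B * Q0) * ρ := (C1 B).symm
        _ = F (σ * (Q0 * B * Q0)) * ρ := by rw [ha]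
        _ = ρ * F ((Q0 * B * Q0) * σ) := h4 B
        _ = ρ * F (Q0 * B * σ) := by rw [hb]
        _ = ρ * F (B * σ) := C2 B
  have h34 : (∀ A : Matrix (Fin m) (Fin m) ℂ, Q0 * Fd (ρ * A) * σ = σ * Fd (A * ρ) * Q0) ↔
      (∀ B : Matrix (Fin n) (Fin n) ℂ,
        F (σ * (Q0 * B * Q0)) * ρ = ρ * F ((Q0 * B * Q0) * σ)) :=
    c3s.trans (cstar_iff.trans c4_iff)
  -- (iv) ↔ (v)
  have h45 : (∀ B : Matrix (Fin n) (Fin n) ℂ,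
      F (σ * (Q0 * B * Q0)) * ρ = ρ * F ((Q0 * B * Q0) * σ)) ↔
      IsCP (fun A => Q0 * Gright A * Q0) := by
    constructor
    · intro h4
      have hcstar : ∀ B, F (σ * B) * ρ = ρ * F (B * σ) := c4_iff.mpr h4
      -- the entrywise modular relation
      have hTrel : ∀ (c j : Fin n) (a b : Fin m),
          (q c : ℂ) * ((star V * F (W * single c j 1 * star W) * V) a b * (p b : ℂ))
          = (q j : ℂ) * ((p a : ℂ) * (star V * F (W * single c j 1 * star W) * V) a b) := by
        intro c j a b
        have h0 := hcstar (W * single c j 1 * star W)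
        have hl : σ * (W * single c j 1 * star W)
            = (q c : ℂ) • (W * single c j 1 * star W) := by
          rw [hσcal, cal_eq, sandwich_mul hW1, diag_mul_single, Matrix.mul_smul,
            Matrix.smul_mul]
        have hr2 : (W * single c j 1 * star W) * σ
            = (q j : ℂ) • (W * single c j 1 * star W) := by
          rw [hσcal, cal_eq, sandwich_mul hW1, single_mul_diag, Matrix.mul_smul,
            Matrix.smul_mul]
        rw [hl, hr2, _root_.map_smul, _root_.map_smul, Matrix.smul_mul, Matrix.mul_smul] at h0
        have h1 := congrArg (fun M => star V * M * V) h0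
        simp only [Matrix.mul_smul, Matrix.smul_mul] at h1
        rw [conj_split hV2, conj_split hV2, hρcal, conj_cal hV1] at h1
        have h2 := congrArg (fun M => M a b) h1
        simp only [Matrix.smul_apply, mul_diagonal, diagonal_mul, smul_eq_mul] at h2
        exact h2
      -- the two linear maps agree
      set L1 : Matrix (Fin n) (Fin n) ℂ →ₗ[ℂ] Matrix (Fin m) (Fin m) ℂ :=
        (LinearMap.mulLeft ℂ ρ) ∘ₗ F ∘ₗ (LinearMap.mulLeft ℂ (s * W)) ∘ₗ
          (LinearMap.mulRight ℂ (star W * u)) with hL1def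
      set L2 : Matrix (Fin n) (Fin n) ℂ →ₗ[ℂ] Matrix (Fin m) (Fin m) ℂ :=
        (LinearMap.mulLeft ℂ r) ∘ₗ (LinearMap.mulRight ℂ r) ∘ₗ F ∘ₗ
          (LinearMap.mulLeft ℂ (Q0 * W)) ∘ₗ (LinearMap.mulRight ℂ (star W * Q0)) with hL2def
      have hL1 : ∀ C, L1 C = ρ * F (s * (W * C * star W) * u) := by
        intro C
        rw [hL1def]
        simp only [LinearMap.coe_comp, Function.comp_apply, LinearMap.mulLeft_apply,
          LinearMap.mulRight_apply]
        rw [show (s * W) * (C * (star W * u)) = s * (W * C * star W) * u from by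
          simp only [mul_assoc]]
      have hL2 : ∀ C, L2 C = r * F (Q0 * (W * C * star W) * Q0) * r := by
        intro C
        rw [hL2def]
        simp only [LinearMap.coe_comp, Function.comp_apply, LinearMap.mulLeft_apply,
          LinearMap.mulRight_apply]
        rw [show (Q0 * W) * (C * (star W * Q0)) = Q0 * (W * C * star W) * Q0 from by
          simp only [mul_assoc], ← mul_assoc]
      have hbase : ∀ c j : Fin n, L1 (single c j 1) = L2 (single c j 1) := by
        intro c j
        rw [hL1, hL2]
        have e1 : s * (W * single c j 1 * star W) * u
            = (((if q c = 0 then (0:ℝ) else (Real.sqrt (q c))⁻¹ : ℝ) : ℂ)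
                * ((Real.sqrt (q j) : ℝ) : ℂ))
              • (W * single c j 1 * star W) := by
          rw [hsdef, hudef, cal_eq, cal_eq, sandwich_mul hW1, sandwich_mul hW1,
            diag_mul_single, Matrix.smul_mul, single_mul_diag, smul_smul, Matrix.mul_smul,
            Matrix.smul_mul]
        have e2 : Q0 * (W * single c j 1 * star W) * Q0
            = (((if q c = 0 then (0:ℝ) else (1:ℝ)) : ℂ)
                * ((if q j = 0 then (0:ℝ) else (1:ℝ)) : ℂ))
              • (W * single c j 1 * star W) := by
          rw [hQ0def, cal_eq, sandwich_mul hW1, sandwich_mul hW1,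
            diag_mul_single, Matrix.smul_mul, single_mul_diag, smul_smul, Matrix.mul_smul,
            Matrix.smul_mul]
          congr 1
          split_ifs <;> push_cast <;> ring
        rw [e1, e2, _root_.map_smul, _root_.map_smul, Matrix.mul_smul, Matrix.mul_smul,
          Matrix.smul_mul]
        refine conj_inj hV2 ?_
        simp only [Matrix.mul_smul, Matrix.smul_mul]
        rw [conj_split hV2 ρ (F (W * single c j 1 * star W)),
          conj_split hV2 (r * F (W * single c j 1 * star W)) r,
          conj_split hV2 r (F (W * single c j 1 * star W)),
          hρcal, conj_cal hV1, hrdef, conj_cal hV1]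
        ext a b
        simp only [Matrix.smul_apply, smul_eq_mul, Matrix.diagonal_mul, Matrix.mul_diagonal]
        exact scalar_key (hp0 a) (hp0 b) (hq0 c) (hq0 j) (hTrel c j a b)
      have hLeq : L1 = L2 := by
        apply LinearMap.ext
        intro C
        rw [matrix_eq_sum_single C, map_sum, map_sum]
        refine Finset.sum_congr rfl fun c _ => ?_
        rw [map_sum, map_sum]
        refine Finset.sum_congr rfl fun j _ => ?_
        rw [show single c j (C c j) = (C c j) • single c j 1 from by
          rw [smul_single, smul_eq_mul, mul_one], _root_.map_smul, _root_.map_smul,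
          hbase]
      have target : ∀ C : Matrix (Fin n) (Fin n) ℂ,
          ρ * F (s * (W * C * star W) * u) = r * F (Q0 * (W * C * star W) * Q0) * r := by
        intro C
        rw [← hL1, ← hL2, hLeq]
      have hid1 : ∀ A, u * Gright A * u = Q0 * Fd (r * A * r) * Q0 := by
        intro A
        refine trace_ext fun B => ?_
        have lhs1 : ((u * Gright A * u) * B).trace = ((r * F (Q0 * B * Q0) * r) * A).trace := by
          calc ((u * Gright A * u) * B).trace
              = ((u * B) * (u * Gright A)).trace := by
                rw [show (u * Gright A * u) * B = (u * Gright A) * (u * B) from by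
                  simp only [mul_assoc], trace_mul_comm]
            _ = (σ * (s * B * u) * Gright A).trace := by
                rw [show σ * (s * B * u) * Gright A = ((σ * s) * B) * (u * Gright A) from by
                  simp only [mul_assoc], hσs]
            _ = (ρ * F (s * B * u) * A).trace := (hGR A (s * B * u)).symm
            _ = ((r * F (Q0 * B * Q0) * r) * A).trace := by
                rw [show (B : Matrix (Fin n) (Fin n) ℂ) = W * (star W * B * W) * star W from
                  (conj_conj hW2 B).symm]
                rw [show ρ * F (s * (W * (star W * B * W) * star W) * u)
                      * A = (ρ * F (s * (W * (star W * B * W) * star W) * u)) * A from rfl,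
                  target (star W * B * W)]
        have rhs1 : ((Q0 * Fd (r * A * r) * Q0) * B).trace
            = ((r * F (Q0 * B * Q0) * r) * A).trace := by
          calc ((Q0 * Fd (r * A * r) * Q0) * B).trace
              = (Fd (r * A * r) * (Q0 * B * Q0)).trace := by
                rw [show (Q0 * Fd (r * A * r) * Q0) * B = (Q0 * Fd (r * A * r)) * (Q0 * B) from by
                  simp only [mul_assoc], trace_mul_comm,
                  show (Q0 * B) * (Q0 * Fd (r * A * r)) = ((Q0 * B) * Q0) * Fd (r * A * r) from by
                  simp only [mul_assoc], trace_mul_comm]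
            _ = ((r * A * r) * F (Q0 * B * Q0)).trace := pair2 _ _
            _ = ((r * F (Q0 * B * Q0) * r) * A).trace := by
                rw [show (r * A * r) * F (Q0 * B * Q0) = (r * A) * (r * F (Q0 * B * Q0)) from by
                  simp only [mul_assoc], trace_mul_comm,
                  show (r * F (Q0 * B * Q0)) * (r * A) = (r * F (Q0 * B * Q0) * r) * A from by
                  simp only [mul_assoc]]
        rw [lhs1, rhs1]
      have hiden : ∀ A : Matrix (Fin m) (Fin m) ℂ,
          Q0 * Gright A * Q0 = s * Fd (r * A * r) * s := by
        intro A
        calc Q0 * Gright A * Q0 = (s * u) * Gright A * (u * s) := by rw [hsu, hus]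
          _ = s * (u * Gright A * u) * s := by simp only [mul_assoc]
          _ = s * (Q0 * Fd (r * A * r) * Q0) * s := by rw [hid1]
          _ = (s * Q0) * Fd (r * A * r) * (Q0 * s) := by simp only [mul_assoc]
          _ = s * Fd (r * A * r) * s := by rw [hsQ0, hQ0s]
      have hfun : (fun A => Q0 * Gright A * Q0)
          = (fun A : Matrix (Fin m) (Fin m) ℂ => s * Fd (r * A * r) * s) := funext hiden
      rw [hfun]
      intro k M hM
      rw [amplify_sandwich (⇑Fd) s s r r M]
      have hrherm : r.IsHermitian := by rw [hrdef]; exact cal_herm _ _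
      have hsherm : s.IsHermitian := by rw [hsdef]; exact cal_herm _ _
      have inner : (oneKron k r * M * oneKron k r).PosSemidef := by
        have h := hM.conjTranspose_mul_mul_same (oneKron k r)
        rwa [(oneKron_herm hrherm).eq] at h
      have hFdCP : (amplify (⇑Fd) k (oneKron k r * M * oneKron k r)).PosSemidef := by
        refine PosSemidef.of_dotProduct_mulVec_nonneg ?_ ?_
        · exact amplify_herm hFdstar inner.1
        · intro x
          rw [dot_eq_trace, amplify_trace_pair pair2]
          exact trace_psd_mul_nonneg inner (hFcp k _ (vecMulVec_psd x))
      have h := hFdCP.conjTranspose_mul_mul_same (oneKron k s)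
      rwa [(oneKron_herm hsherm).eq] at h
    · intro hcp
      let Θ : Matrix (Fin m) (Fin m) ℂ →ₗ[ℂ] Matrix (Fin n) (Fin n) ℂ :=
        { toFun := fun A => Q0 * Gright A * Q0
          map_add' := fun X Y => by
            show Q0 * Gright (X + Y) * Q0 = Q0 * Gright X * Q0 + Q0 * Gright Y * Q0
            rw [map_add, mul_add, add_mul]
          map_smul' := fun c X => by
            show Q0 * Gright (c • X) * Q0 = c • (Q0 * Gright X * Q0)
            rw [_root_.map_smul, Matrix.mul_smul, Matrix.smul_mul] }
      have hpos : ∀ A : Matrix (Fin m) (Fin m) ℂ, A.PosSemidef → (Θ A).PosSemidef :=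
        fun A hA => isCP_pos hcp hA
      have h1 : ∀ A : Matrix (Fin m) (Fin m) ℂ,
          (Q0 * Gright A * Q0)ᴴ = Q0 * Gright Aᴴ * Q0 := by
        intro A
        exact (star_pres_of_pos Θ hpos A).symm
      exact h34.mp (h23.mp (h12.mp h1))
  exact ⟨h12, h23, h34, h45⟩
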